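/- Let q, j be integers with 1 ≤ j ≤ q, let δ be real with 0 < δ < δ* = (q+1−j)/j. Then the polynomial Q has exactly j complex roots, counted with multiplicity, in the open unit disk {z ∈ ℂ : |z| < 1}. -/

import Mathlib

open Polynomial

open Metric Complex

/-- Log-derivative of a product of linear factors. -/
lemma logderiv_prod (z : ℂ) : ∀ (s : Multiset ℂ), (∀ r ∈ s, z ≠ r) →
    eval z (derivative (s.map fun r => X - C r).prod) =
      eval z ((s.map fun r => X - C r).prod) * (s.map fun r => (z - r)⁻¹).sum := by
  intro s
  induction s using Multiset.induction_on with
  | empty => simp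
  | cons a s ih =>
  intro hz
  have ha : z - a ≠ 0 := sub_ne_zero.2 (hz a (Multiset.mem_cons_self a s))
  have ih' := ih (fun r hr => hz r (Multiset.mem_cons_of_mem hr))
  simp only [Multiset.map_cons, Multiset.prod_cons, Multiset.sum_cons,
    derivative_mul, derivative_sub, derivative_X, derivative_C, sub_zero, one_mul,
    eval_add, eval_mul, eval_sub, eval_X, eval_C, ih']
  field_simp

/-- Sum of circle integrals of `(z - r)⁻¹` over a multiset avoiding the circle. -/
lemma circle_sum_int (R : ℝ) (hR : 0 ≤ R) : ∀ (s : Multiset ℂ),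
    (∀ r ∈ s, r ∉ sphere (0:ℂ) R) →
    CircleIntegrable (fun z => (s.map fun r => (z - r)⁻¹).sum) 0 R ∧
    (∮ z in C(0, R), (s.map fun r => (z - r)⁻¹).sum) =
      (s.map fun r => ∮ z in C(0, R), (z - r)⁻¹).sum := by
  intro s
  induction s using Multiset.induction_on with
  | empty =>
    intro _
    constructor
    · simpa using circleIntegrable_const (0:ℂ) (0:ℂ) R
    · simp [circleIntegral]
  | cons a s ih =>
  intro hs
  have ha : CircleIntegrable (fun z => (z - a)⁻¹) 0 R := by
    rw [circleIntegrable_sub_inv_iff]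
    exact Or.inr (by rw [_root_.abs_of_nonneg hR]; exact hs a (Multiset.mem_cons_self a s))
  have ih' := ih (fun r hr => hs r (Multiset.mem_cons_of_mem hr))
  constructor
  · simp only [Multiset.map_cons, Multiset.sum_cons]; exact ha.add ih'.1
  · simp only [Multiset.map_cons, Multiset.sum_cons]
    have : (∮ z in C(0, R), ((z - a)⁻¹ + (s.map fun r => (z - r)⁻¹).sum)) =
        (∮ z in C(0, R), (z - a)⁻¹) + ∮ z in C(0, R), (s.map fun r => (z - r)⁻¹).sum := by
      simp only [circleIntegral, smul_add]
      exact intervalIntegral.integral_add ha.out ih'.1.out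
    rw [this, ih'.2]

lemma sum_ite_count (R : ℝ) : ∀ (s : Multiset ℂ),
    (s.map fun r => if ‖r‖ < R then (2 * Real.pi * I) else 0).sum =
      (Multiset.card (s.filter fun z => ‖z‖ < R) : ℂ) * (2 * Real.pi * I) := by
  intro s
  induction s using Multiset.induction_on with
  | empty => simp
  | cons a s ih =>
  by_cases h : ‖a‖ < R <;>
    simp [Multiset.filter_cons, h, ih, add_mul] <;> ring

lemma radius_exists (q j : ℕ) (hj : 1 ≤ j) (hjq : j ≤ q) (δ : ℝ) (hδ : 0 < δ)
    (hδs : δ < ((q : ℝ) + 1 - j) / j) :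
    ∃ R : ℝ, 0 < R ∧ R < 1 ∧ ∀ s : ℝ, R ≤ s → s < 1 → s ^ (q+1) + δ < (1+δ) * s ^ j := by
  set h : ℝ → ℝ := fun s => (1+δ) * s ^ j - s ^ (q+1) - δ with hh
  set h' : ℝ → ℝ := fun s => (1+δ) * (j * s ^ (j-1)) - (q+1) * s ^ q with hh'
  have hderiv : ∀ x : ℝ, HasDerivAt h (h' x) x := by
    intro x
    have h1 : HasDerivAt (fun s : ℝ => s ^ j) ((j : ℝ) * x ^ (j-1)) x := hasDerivAt_pow j x
    have h2 : HasDerivAt (fun s : ℝ => s ^ (q+1)) (((q:ℝ)+1) * x ^ q) x := by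
      simpa using hasDerivAt_pow (q+1) x
    simpa [hh, hh'] using ((h1.const_mul (1+δ)).sub h2).sub_const δ
  have hj0 : (0:ℝ) < (j:ℝ) := by positivity
  have hkey : δ * j < (q:ℝ) + 1 - j := by
    have := (lt_div_iff₀ hj0).mp hδs
    linarith
  have h'1 : h' 1 < 0 := by
    simp only [hh', one_pow, mul_one]
    nlinarith
  have hcont : Continuous h' := by fun_prop
  have hopen : IsOpen {x : ℝ | h' x < 0} := isOpen_lt hcont continuous_const
  obtain ⟨ε, hε, hball⟩ := Metric.isOpen_iff.mp hopen 1 h'1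
  set R : ℝ := max (1 - ε/2) (1/2) with hR
  have hR0 : 0 < R := lt_of_lt_of_le (by norm_num) (le_max_right _ _)
  have hR1 : R < 1 := by
    apply max_lt <;> [linarith; norm_num]
  have hneg : ∀ x ∈ Set.Icc R 1, h' x < 0 := by
    intro x hx
    apply hball
    rw [Metric.mem_ball, Real.dist_eq, abs_sub_lt_iff]
    have h1 : 1 - ε/2 ≤ R := le_max_left _ _
    constructor <;> [linarith [hx.2]; linarith [hx.1]]
  have hanti : StrictAntiOn h (Set.Icc R 1) := by
    apply strictAntiOn_of_deriv_neg (convex_Icc R 1)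
    · exact (Continuous.continuousOn (by fun_prop))
    · intro x hx
      rw [interior_Icc] at hx
      rw [(hderiv x).deriv]
      exact hneg x ⟨hx.1.le, hx.2.le⟩
  refine ⟨R, hR0, hR1, fun s hs hs1 => ?_⟩
  have hhs : h 1 < h s := hanti ⟨hs, hs1.le⟩ ⟨hR1.le, le_rfl⟩ hs1
  have : h 1 = 0 := by simp [hh]
  simp only [hh, one_pow, mul_one] at hhs
  linarith

section
variable (q j : ℕ) (δ : ℝ)

noncomputable def Qpoly : ℂ[X] := (X : ℂ[X]) ^ (q+1) - C ((1:ℂ) + (δ:ℂ)) * X ^ j + C (δ:ℂ)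

lemma Qpoly_monic (hjq : j ≤ q) : (Qpoly q j δ).Monic := by
  have hQ : Qpoly q j δ = X ^ (q+1) + (C (δ:ℂ) - C ((1:ℂ) + (δ:ℂ)) * X ^ j) := by
    rw [Qpoly]; ring
  rw [hQ]
  apply monic_X_pow_add
  have h1 : degree (C (δ:ℂ) - C ((1:ℂ) + (δ:ℂ)) * X ^ j) ≤ (j : WithBot ℕ) := by
    refine le_trans (degree_sub_le _ _) (max_le ?_ ?_)
    · exact degree_C_le.trans (by exact_mod_cast Nat.zero_le j)
    · exact degree_C_mul_X_pow_le _ _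
  exact lt_of_le_of_lt h1 (by exact_mod_cast Nat.lt_succ_of_le hjq)

lemma Qpoly_degree (hjq : j ≤ q) : (Qpoly q j δ).degree = (q+1 : ℕ) := by
  have hQ : Qpoly q j δ = X ^ (q+1) + (C (δ:ℂ) - C ((1:ℂ) + (δ:ℂ)) * X ^ j) := by
    rw [Qpoly]; ring
  rw [hQ, degree_add_eq_left_of_degree_lt, degree_X_pow]
  rw [degree_X_pow]
  have h1 : degree (C (δ:ℂ) - C ((1:ℂ) + (δ:ℂ)) * X ^ j) ≤ (j : WithBot ℕ) := by
    refine le_trans (degree_sub_le _ _) (max_le ?_ ?_)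
    · exact degree_C_le.trans (by exact_mod_cast Nat.zero_le j)
    · exact degree_C_mul_X_pow_le _ _
  exact lt_of_le_of_lt h1 (by exact_mod_cast Nat.lt_succ_of_le hjq)

lemma Qpoly_card_roots (hjq : j ≤ q) : Multiset.card (Qpoly q j δ).roots = q + 1 := by
  rw [splits_iff_card_roots.mp (IsAlgClosed.splits _)]
  exact natDegree_eq_of_degree_eq_some (Qpoly_degree q j δ hjq)

lemma Qpoly_eq_prod (hjq : j ≤ q) :
    Qpoly q j δ = ((Qpoly q j δ).roots.map fun a => X - C a).prod :=
  (IsAlgClosed.splits _).eq_prod_roots_of_monic (Qpoly_monic q j δ hjq)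

lemma Qpoly_eval (z : ℂ) :
    eval z (Qpoly q j δ) = z ^ (q+1) - ((1:ℂ) + δ) * z ^ j + δ := by
  simp [Qpoly]

lemma Qpoly_deriv_eval (z : ℂ) :
    eval z (derivative (Qpoly q j δ)) =
      ((q:ℂ)+1) * z ^ q - ((1:ℂ) + δ) * ((j:ℂ) * z ^ (j-1)) := by
  simp [Qpoly, derivative_X_pow]

/-- roots in the unit disk are in fact in the ball of radius `R`. -/
lemma root_small (hδ : 0 < δ) {R : ℝ}
    (hR : ∀ s : ℝ, R ≤ s → s < 1 → s ^ (q+1) + δ < (1+δ) * s ^ j)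
    (z : ℂ) (hz : eval z (Qpoly q j δ) = 0) (h1 : ‖z‖ < 1) :
    ‖z‖ < R := by
  by_contra hcon
  push_neg at hcon
  have hlt := hR (‖z‖) hcon h1
  have heq : z ^ (q+1) + (δ:ℂ) = ((1:ℂ)+δ) * z ^ j := by
    rw [Qpoly_eval] at hz
    linear_combination hz
  have habs : (1+δ) * ‖z‖ ^ j ≤ ‖z‖ ^ (q+1) + δ := by
    have h2 : ‖(((1:ℂ)+δ) * z ^ j)‖ = (1+δ) * ‖z‖ ^ j := by
      rw [norm_mul, norm_pow]
      congr 1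
      rw [show ((1:ℂ)+δ) = (((1+δ : ℝ)):ℂ) by push_cast; ring, Complex.norm_real, Real.norm_eq_abs,
        abs_of_pos (by linarith)]
    calc (1+δ) * ‖z‖ ^ j = ‖(z ^ (q+1) + (δ:ℂ))‖ := by
          rw [← h2, heq]
      _ ≤ ‖(z ^ (q+1))‖ + ‖(δ:ℂ)‖ := norm_add_le _ _
      _ = ‖z‖ ^ (q+1) + δ := by
          rw [norm_pow, Complex.norm_real, Real.norm_eq_abs, abs_of_pos hδ]
  linarith

end

lemma logdiff {K : Type*} [Field K] {z D N X P' : K} (c : K) (hz : z ≠ 0) (hD : D ≠ 0)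
    (hQ : N - D ≠ 0) (hP : P' * (z * D) = c * D * (N - D) + X * z) :
    P' / (N - D) = c * z⁻¹ + -D / (N - D) * -(X / D ^ 2) := by
  have hzD : z * D ≠ 0 := mul_ne_zero hz hD
  have hP' : P' = (c * D * (N - D) + X * z) / (z * D) := by
    rw [eq_div_iff hzD]; exact hP
  rw [hP']
  field_simp

lemma my_circleIntegral_add {f g : ℂ → ℂ} {c : ℂ} {R : ℝ}
    (hf : CircleIntegrable f c R) (hg : CircleIntegrable g c R) :
    (∮ z in C(c, R), (f z + g z)) = (∮ z in C(c, R), f z) + ∮ z in C(c, R), g z := by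
  simp only [circleIntegral, smul_add]
  exact intervalIntegral.integral_add hf.out hg.out

section
variable {q j : ℕ} {δ R : ℝ}

-- abbreviations
noncomputable def Ffun (q j : ℕ) (δ : ℝ) : ℂ → ℂ :=
  fun z => 1 - (z ^ (q+1) + (δ:ℂ)) / (((1:ℂ) + δ) * z ^ j)

noncomputable def Ffun' (q j : ℕ) (δ : ℝ) : ℂ → ℂ :=
  fun z => -(((((q:ℂ)+1) * z ^ q) * (((1:ℂ) + δ) * z ^ j) -
      (z ^ (q+1) + (δ:ℂ)) * (((1:ℂ) + δ) * ((j:ℂ) * z ^ (j-1)))) / (((1:ℂ) + δ) * z ^ j) ^ 2)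

lemma one_add_delta_ne (hδ : 0 < δ) : ((1:ℂ) + δ) ≠ 0 := by
  rw [show ((1:ℂ)+δ) = (((1+δ : ℝ)):ℂ) by push_cast; ring]
  exact_mod_cast ne_of_gt (by linarith : (0:ℝ) < 1 + δ)

lemma Ffun_hasDerivAt (hδ : 0 < δ) {z : ℂ} (hz : z ≠ 0) :
    HasDerivAt (Ffun q j δ) (Ffun' q j δ z) z := by
  have hden : ((1:ℂ) + δ) * z ^ j ≠ 0 :=
    mul_ne_zero (one_add_delta_ne hδ) (pow_ne_zero _ hz)
  have h1 : HasDerivAt (fun z : ℂ => z ^ (q+1) + (δ:ℂ)) (((q:ℂ)+1) * z ^ q) z := by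
    simpa using (hasDerivAt_pow (q+1) z).add_const (δ:ℂ)
  have h2 : HasDerivAt (fun z : ℂ => ((1:ℂ) + δ) * z ^ j)
      (((1:ℂ) + δ) * ((j:ℂ) * z ^ (j-1))) z := (hasDerivAt_pow j z).const_mul _
  exact (h1.div h2 hden).const_sub 1
end

section
variable {q j : ℕ} {δ R : ℝ}

lemma sphere_facts (hδ : 0 < δ) (hj : 1 ≤ j) (hR0 : 0 < R)
    (hkey : R ^ (q+1) + δ < (1+δ) * R ^ j) {z : ℂ} (hz : ‖z‖ = R) :
    z ≠ 0 ∧ Ffun q j δ z ∈ slitPlane ∧ Ffun q j δ z ≠ 0 ∧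
      eval z (Qpoly q j δ) = -(((1:ℂ) + δ) * z ^ j) * Ffun q j δ z ∧
      eval z (Qpoly q j δ) ≠ 0 := by
  have hz0 : z ≠ 0 := by
    intro h; rw [h] at hz; simp at hz; exact absurd hz.symm (ne_of_gt hR0)
  have hden_ne : ((1:ℂ) + δ) * z ^ j ≠ 0 :=
    mul_ne_zero (one_add_delta_ne hδ) (pow_ne_zero _ hz0)
  have habs1 : ‖((1:ℂ) + δ)‖ = 1 + δ := by
    rw [show ((1:ℂ)+δ) = (((1+δ : ℝ)):ℂ) by push_cast; ring, Complex.norm_real, Real.norm_eq_abs,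
      abs_of_pos (by linarith)]
  have hu : ‖((z ^ (q+1) + (δ:ℂ)) / (((1:ℂ) + δ) * z ^ j))‖ < 1 := by
    rw [norm_div, div_lt_one (by rw [norm_mul, norm_pow, habs1, hz]; positivity)]
    calc ‖(z ^ (q+1) + (δ:ℂ))‖
        ≤ ‖(z ^ (q+1))‖ + ‖(δ:ℂ)‖ := norm_add_le _ _
      _ = R ^ (q+1) + δ := by rw [norm_pow, hz, Complex.norm_real, Real.norm_eq_abs, abs_of_pos hδ]
      _ < (1+δ) * R ^ j := hkey
      _ = ‖(((1:ℂ) + δ) * z ^ j)‖ := by rw [norm_mul, norm_pow, habs1, hz]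
  have hslit : Ffun q j δ z ∈ slitPlane := by
    have := Complex.mem_slitPlane_of_norm_lt_one
      (z := -((z ^ (q+1) + (δ:ℂ)) / (((1:ℂ) + δ) * z ^ j))) (by simpa using hu)
    simpa [Ffun, sub_eq_add_neg] using this
  have hFne : Ffun q j δ z ≠ 0 := Complex.slitPlane_ne_zero hslit
  have hQfact : eval z (Qpoly q j δ) = -(((1:ℂ) + δ) * z ^ j) * Ffun q j δ z := by
    rw [Qpoly_eval, Ffun]
    have hA := one_add_delta_ne hδ
    field_simp
    ring
  exact ⟨hz0, hslit, hFne, hQfact, by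
    rw [hQfact]; exact mul_ne_zero (neg_ne_zero.mpr hden_ne) hFne⟩

lemma integrand_ident (hδ : 0 < δ) (hj : 1 ≤ j) (hR0 : 0 < R)
    (hkey : R ^ (q+1) + δ < (1+δ) * R ^ j) {z : ℂ} (hz : ‖z‖ = R) :
    eval z (derivative (Qpoly q j δ)) / eval z (Qpoly q j δ) =
      (j:ℂ) * z⁻¹ + (Ffun q j δ z)⁻¹ * Ffun' q j δ z := by
  obtain ⟨hz0, _, hFne, hQfact, hQne⟩ := sphere_facts hδ hj hR0 hkey hz
  obtain ⟨m, rfl⟩ : ∃ m, j = m + 1 := ⟨j - 1, (Nat.succ_pred_eq_of_pos hj).symm⟩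
  have hA : ((1:ℂ) + δ) ≠ 0 := one_add_delta_ne hδ
  have hFval : (Ffun q (m+1) δ z)⁻¹ =
      (-(((1:ℂ) + δ) * z ^ (m+1))) / eval z (Qpoly q (m+1) δ) := by
    have hden_ne' : -(((1:ℂ) + δ) * z ^ (m+1)) ≠ 0 :=
      neg_ne_zero.mpr (mul_ne_zero hA (pow_ne_zero _ hz0))
    rw [hQfact]
    exact (div_mul_cancel_left₀ hden_ne' _).symm
  rw [hFval, Ffun', Qpoly_deriv_eval, Qpoly_eval]
  simp only [Nat.add_sub_cancel]
  have hrw : z ^ (q+1) - ((1:ℂ)+δ) * z ^ (m+1) + δ =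
      (z ^ (q+1) + (δ:ℂ)) - ((1:ℂ)+δ) * z ^ (m+1) := by ring
  have hQne' : (z ^ (q+1) + (δ:ℂ)) - ((1:ℂ)+δ) * z ^ (m+1) ≠ 0 := by
    rw [Qpoly_eval, hrw] at hQne; exact hQne
  rw [hrw]
  refine logdiff _ hz0 (mul_ne_zero hA (pow_ne_zero _ hz0)) hQne' ?_
  push_cast
  ring

end

section
variable {q j : ℕ} {δ R : ℝ}

lemma rouche_eval (hδ : 0 < δ) (hj : 1 ≤ j) (hR0 : 0 < R)
    (hkey : R ^ (q+1) + δ < (1+δ) * R ^ j) :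
    (∮ z in C(0, R), eval z (derivative (Qpoly q j δ)) / eval z (Qpoly q j δ)) =
      2 * Real.pi * I * j := by
  have habs : ∀ z ∈ sphere (0:ℂ) R, ‖z‖ = R := by
    intro z hz
    rwa [mem_sphere, dist_zero_right] at hz
  have hz0 : ∀ z ∈ sphere (0:ℂ) R, z ≠ 0 := by
    intro z hz h0
    rw [h0] at hz
    have := habs 0 hz
    simp at this
    exact absurd this.symm (ne_of_gt hR0)
  have hcongr : Set.EqOn (fun z => eval z (derivative (Qpoly q j δ)) / eval z (Qpoly q j δ))
      (fun z => (j:ℂ) * z⁻¹ + (Ffun q j δ z)⁻¹ * Ffun' q j δ z) (sphere (0:ℂ) R) :=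
    fun z hz => integrand_ident hδ hj hR0 hkey (habs z hz)
  rw [circleIntegral.integral_congr hR0.le hcongr]
  -- integrability
  have hden_ne : ∀ z ∈ sphere (0:ℂ) R, ((1:ℂ) + δ) * z ^ j ≠ 0 := fun z hz =>
    mul_ne_zero (one_add_delta_ne hδ) (pow_ne_zero _ (hz0 z hz))
  have hdencont : ContinuousOn (fun z : ℂ => ((1:ℂ) + δ) * z ^ j) (sphere (0:ℂ) R) :=
    continuousOn_const.mul (continuousOn_id.pow _)
  have hnumcont : ContinuousOn (fun z : ℂ => z ^ (q+1) + (δ:ℂ)) (sphere (0:ℂ) R) :=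
    (continuousOn_id.pow _).add continuousOn_const
  have hFcont : ContinuousOn (Ffun q j δ) (sphere (0:ℂ) R) :=
    continuousOn_const.sub (hnumcont.div hdencont hden_ne)
  have hF'cont : ContinuousOn (Ffun' q j δ) (sphere (0:ℂ) R) := by
    refine ContinuousOn.neg (ContinuousOn.div ?_ (hdencont.pow 2)
      (fun z hz => pow_ne_zero _ (hden_ne z hz)))
    exact ((continuousOn_const.mul (continuousOn_id.pow _)).mul hdencont).sub
      (hnumcont.mul (continuousOn_const.mul (continuousOn_const.mul (continuousOn_id.pow _))))
  have hFne : ∀ z ∈ sphere (0:ℂ) R, Ffun q j δ z ≠ 0 := fun z hz =>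
    (sphere_facts hδ hj hR0 hkey (habs z hz)).2.2.1
  have hint1 : CircleIntegrable (fun z : ℂ => (j:ℂ) * z⁻¹) 0 R :=
    (continuousOn_const.mul (ContinuousOn.inv₀ continuousOn_id hz0)).circleIntegrable hR0.le
  have hint2 : CircleIntegrable (fun z : ℂ => (Ffun q j δ z)⁻¹ * Ffun' q j δ z) 0 R :=
    ((hFcont.inv₀ hFne).mul hF'cont).circleIntegrable hR0.le
  rw [my_circleIntegral_add hint1 hint2]
  have e1 : (∮ z in C(0, R), (j:ℂ) * z⁻¹) = 2 * Real.pi * I * j := by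
    rw [circleIntegral.integral_const_mul]
    have := circleIntegral.integral_sub_center_inv (0:ℂ) (R := R) hR0.ne'
    simp only [sub_zero] at this
    rw [this]
    ring
  have e2 : (∮ z in C(0, R), (Ffun q j δ z)⁻¹ * Ffun' q j δ z) = 0 := by
    refine circleIntegral.integral_eq_zero_of_hasDerivWithinAt hR0.le
      (f := fun z => Complex.log (Ffun q j δ z)) (fun z hz => ?_)
    have hslit := (sphere_facts hδ hj hR0 hkey (habs z hz)).2.1
    exact ((Complex.hasDerivAt_log hslit).comp z
      (Ffun_hasDerivAt hδ (hz0 z hz))).hasDerivWithinAt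
  rw [e1, e2, add_zero]

lemma arg_principle (hjq : j ≤ q) (hδ : 0 < δ) (hj : 1 ≤ j) (hR0 : 0 < R) (hR1 : R < 1)
    (hRs : ∀ s : ℝ, R ≤ s → s < 1 → s ^ (q+1) + δ < (1+δ) * s ^ j) :
    (∮ z in C(0, R), eval z (derivative (Qpoly q j δ)) / eval z (Qpoly q j δ)) =
      (Multiset.card ((Qpoly q j δ).roots.filter fun z => ‖z‖ < R) : ℂ) *
        (2 * Real.pi * I) := by
  have habs : ∀ z ∈ sphere (0:ℂ) R, ‖z‖ = R := by
    intro z hz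
    rwa [mem_sphere, dist_zero_right] at hz
  have hroot_ne : ∀ r ∈ (Qpoly q j δ).roots, ‖r‖ ≠ R := by
    intro r hr
    have hre := (mem_roots'.mp hr).2
    rcases lt_or_ge (‖r‖) 1 with h1 | h1
    · exact ne_of_lt (root_small q j δ hδ hRs r hre h1)
    · exact ne_of_gt (lt_of_lt_of_le hR1 h1)
  have hnotsphere : ∀ r ∈ (Qpoly q j δ).roots, r ∉ sphere (0:ℂ) R := by
    intro r hr hmem
    exact hroot_ne r hr (habs r hmem)
  have hcongr : Set.EqOn (fun z => eval z (derivative (Qpoly q j δ)) / eval z (Qpoly q j δ))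
      (fun z => ((Qpoly q j δ).roots.map fun r => (z - r)⁻¹).sum) (sphere (0:ℂ) R) := by
    intro z hz
    have hzne : ∀ r ∈ (Qpoly q j δ).roots, z ≠ r := by
      intro r hr h
      exact hroot_ne r hr (h ▸ habs z hz)
    have hev : eval z (Qpoly q j δ) ≠ 0 := by
      intro h0
      have : z ∈ (Qpoly q j δ).roots :=
        mem_roots'.mpr ⟨(Qpoly_monic q j δ hjq).ne_zero, h0⟩
      exact hzne z this rfl
    have hld := logderiv_prod z (Qpoly q j δ).roots hzne
    rw [← Qpoly_eq_prod q j δ hjq] at hld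
    simp only
    rw [hld, mul_div_cancel_left₀ _ hev]
  rw [circleIntegral.integral_congr hR0.le hcongr,
    (circle_sum_int R hR0.le (Qpoly q j δ).roots hnotsphere).2]
  have hmap : ((Qpoly q j δ).roots.map fun r => ∮ z in C(0, R), (z - r)⁻¹) =
      ((Qpoly q j δ).roots.map fun r =>
        if ‖r‖ < R then (2 * Real.pi * I) else 0) := by
    refine Multiset.map_congr rfl (fun r hr => ?_)
    by_cases h : ‖r‖ < R
    · rw [if_pos h]
      exact circleIntegral.integral_sub_inv_of_mem_ball
        (by rwa [mem_ball, dist_zero_right])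
    · rw [if_neg h]
      have hrR : R < ‖r‖ := lt_of_le_of_ne (not_lt.mp h) (Ne.symm (hroot_ne r hr))
      have hr0 : r ≠ 0 := by
        intro h0
        rw [h0] at hrR
        simp at hrR
        linarith
      refine circleIntegral.integral_eq_zero_of_hasDerivWithinAt hR0.le
        (f := fun z => Complex.log (1 - z / r)) (fun z hz => ?_)
      have hzr : ‖z‖ = R := habs z hz
      have hzner : z ≠ r := fun h => by rw [h] at hzr; exact hroot_ne r hr hzr
      have hslit : (1:ℂ) - z / r ∈ slitPlane := by
        have : ‖-(z / r)‖ < 1 := by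
          rw [norm_neg, norm_div, hzr,
            div_lt_one (lt_trans hR0 hrR)]
          exact hrR
        simpa [sub_eq_add_neg] using Complex.mem_slitPlane_of_norm_lt_one this
      have hinner : HasDerivAt (fun z : ℂ => 1 - z / r) (-(1 / r)) z := by
        simpa using ((hasDerivAt_id z).div_const r).const_sub 1
      have hcomp := (Complex.hasDerivAt_log hslit).comp z hinner
      have heq : ((1:ℂ) - z / r)⁻¹ * -(1 / r) = (z - r)⁻¹ := by
        have h1 : (1:ℂ) - z / r ≠ 0 := Complex.slitPlane_ne_zero hslit
        field_simp
        ring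
      rw [← heq]
      exact hcomp.hasDerivWithinAt
  rw [hmap, sum_ite_count]

end

/-- for `0 < δ < δ* = (q+1−j)/j`, the polynomial
`Q(λ) = λ^{q+1} − (1+δ)·λ^j + δ` has exactly `j` complex roots (with
multiplicity) in the open unit disk. -/
theorem stmt_7 (q j : ℕ) (hj : 1 ≤ j) (hjq : j ≤ q) (δ : ℝ) (hδ : 0 < δ)
    (hδs : δ < ((q : ℝ) + 1 - j) / j) :
    Multiset.card ((((X : ℂ[X]) ^ (q + 1) - C ((1 : ℂ) + (δ : ℂ)) * X ^ j + C (δ : ℂ)).roots).filter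
      (fun z => ‖z‖ < 1)) = j := by
  obtain ⟨R, hR0, hR1, hRs⟩ := radius_exists q j hj hjq δ hδ hδs
  have hkey := hRs R le_rfl hR1
  have hQ : ((X : ℂ[X]) ^ (q + 1) - C ((1 : ℂ) + (δ : ℂ)) * X ^ j + C (δ : ℂ)) = Qpoly q j δ :=
    rfl
  rw [hQ]
  have hfilt : ((Qpoly q j δ).roots.filter fun z => ‖z‖ < 1) =
      ((Qpoly q j δ).roots.filter fun z => ‖z‖ < R) := by
    refine Multiset.filter_congr (fun z hz => ?_)
    exact ⟨fun h1 => root_small q j δ hδ hRs z (mem_roots'.mp hz).2 h1,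
      fun h => lt_trans h hR1⟩
  rw [hfilt]
  have h2 := arg_principle hjq hδ hj hR0 hR1 hRs
  rw [rouche_eval hδ hj hR0 hkey] at h2
  have hne : (2 * Real.pi * I : ℂ) ≠ 0 := by
    simp [Real.pi_ne_zero, Complex.I_ne_zero, Complex.ofReal_ne_zero]
  have hcast : ((Multiset.card ((Qpoly q j δ).roots.filter fun z => ‖z‖ < R)) : ℂ)
      = (j : ℂ) := by
    apply mul_right_cancel₀ hne
    rw [← h2]
    ring
  exact_mod_cast hcast
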